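/- Let q be a prime power, let F_q be a finite field with q elements, and let n, k, δ, α be positive integers with α ≥ 2 and δ + k ≤ n. A set C of k-dimensional subspaces of F_q^n is an α-(n,k,δ)^c_q covering Grassmannian code if and only if C^⊥ = {V^⊥ : V ∈ C} is an (n−k−δ+1)-(n, n−k, α−1)^m_q multiple Grassmannian code. -/

import Mathlib

open scoped Classical

/-- The orthogonal complement of a subspace of `F^n` with respect to the
standard symmetric bilinear form `b(x,y) = ∑ i, x i * y i`. -/
def perp {F : Type*} [Field F] {n : ℕ}
    (V : Submodule F (Fin n → F)) : Submodule F (Fin n → F) where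
  carrier := {x | ∀ v ∈ V, ∑ i, x i * v i = 0}
  zero_mem' := by
    intro v hv
    simp
  add_mem' := by
    intro a b ha hb v hv
    simp only [Set.mem_setOf_eq] at *
    simp [Pi.add_apply, add_mul, Finset.sum_add_distrib, ha v hv, hb v hv]
  smul_mem' := by
    intro c a ha v hv
    simp only [Set.mem_setOf_eq] at *
    simp [Pi.smul_apply, smul_eq_mul, mul_assoc, ← Finset.mul_sum, ha v hv]

section Aux

variable {F : Type*} [Field F] {n : ℕ}

/-- The standard bilinear form on `F^n`. -/
noncomputable def stdForm (F : Type*) [Field F] (n : ℕ) :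
    LinearMap.BilinForm F (Fin n → F) :=
  LinearMap.mk₂ F (fun x y => ∑ i, x i * y i)
    (by intros; simp [add_mul, Finset.sum_add_distrib])
    (by intros; simp [mul_assoc, Finset.mul_sum])
    (by intros; simp [mul_add, Finset.sum_add_distrib])
    (by intros; simp [mul_left_comm, Finset.mul_sum])

@[simp] lemma stdForm_apply (x y : Fin n → F) :
    stdForm F n x y = ∑ i, x i * y i := rfl

lemma stdForm_isRefl : (stdForm F n).IsRefl := by
  intro x y h
  simpa [mul_comm] using h

lemma stdForm_nondegenerate : (stdForm F n).Nondegenerate := by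
  refine ⟨?_, ?_⟩ <;> intro x hx <;> funext i <;> have := hx (Pi.single i 1) <;>
    simpa [Pi.single_apply, Finset.sum_ite_eq', Finset.sum_ite_eq] using this

lemma perp_eq_orthogonal (V : Submodule F (Fin n → F)) :
    perp V = (stdForm F n).orthogonal V := by
  ext x
  constructor
  · intro hx v hv
    have := hx v hv
    simpa [LinearMap.BilinForm.IsOrtho, mul_comm] using this
  · intro hx v hv
    have := hx v hv
    simpa [LinearMap.BilinForm.IsOrtho, mul_comm] using this

lemma perp_finrank (V : Submodule F (Fin n → F)) :
    Module.finrank F (perp V) = n - Module.finrank F V := by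
  rw [perp_eq_orthogonal,
    LinearMap.BilinForm.finrank_orthogonal stdForm_nondegenerate]
  simp

lemma perp_perp (V : Submodule F (Fin n → F)) : perp (perp V) = V := by
  rw [perp_eq_orthogonal, perp_eq_orthogonal]
  exact LinearMap.BilinForm.orthogonal_orthogonal stdForm_nondegenerate stdForm_isRefl V

lemma perp_injective : Function.Injective (perp (F := F) (n := n)) := by
  intro V W h
  have := congrArg perp h
  rwa [perp_perp, perp_perp] at this

lemma perp_anti {V W : Submodule F (Fin n → F)} (h : V ≤ W) : perp W ≤ perp V :=
  fun x hx v hv => hx v (h hv)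

lemma le_perp_iff {V W : Submodule F (Fin n → F)} : V ≤ perp W ↔ W ≤ perp V := by
  constructor <;> intro h x hx v hv
  · have := h hv x hx
    simpa [mul_comm] using this
  · have := h hv x hx
    simpa [mul_comm] using this

lemma exists_le_finrank_eq (T : Submodule F (Fin n → F)) (m : ℕ)
    (hm : m ≤ Module.finrank F T) : ∃ T' ≤ T, Module.finrank F T' = m := by
  obtain ⟨f, hf⟩ := exists_linearIndependent_of_le_finrank hm
  refine ⟨(Submodule.span F (Set.range f)).map T.subtype, Submodule.map_subtype_le _ _, ?_⟩
  rw [Submodule.finrank_map_subtype_eq]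
  rw [finrank_span_eq_card hf]
  simp

end Aux

/-- A set `C` of `k`-dimensional subspaces of `F_q^n` is an `a`-`(n,k,d)^c_q`
covering Grassmannian code iff `C^⊥ = {V^⊥ : V ∈ C}` is an
`(n-k-d+1)`-`(n, n-k, a-1)^m_q` multiple Grassmannian code. -/
theorem stmt4 (q : ℕ) (hq : IsPrimePow q) (F : Type) [Field F] [Fintype F]
    (hF : Fintype.card F = q) (n k d a : ℕ)
    (hn : 1 ≤ n) (hk : 1 ≤ k) (hd : 1 ≤ d) (ha : 2 ≤ a) (hdkn : d + k ≤ n)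
    (C : Set (Submodule F (Fin n → F)))
    (hC : ∀ V ∈ C, Module.finrank F V = k) :
    (∀ S : Finset (Submodule F (Fin n → F)), ↑S ⊆ C → S.card = a →
        d + k ≤ Module.finrank F ↥(S.sup id)) ↔
      ((∀ U ∈ perp '' C, Module.finrank F U = n - k) ∧
        ∀ T : Submodule F (Fin n → F), Module.finrank F T = n - k - d + 1 →
          Set.ncard {U | U ∈ perp '' C ∧ T ≤ U} ≤ a - 1) := by
  haveI : Finite (Submodule F (Fin n → F)) :=
    Finite.of_injective (fun V => (V : Set (Fin n → F))) SetLike.coe_injective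
  constructor
  · intro hcov
    refine ⟨?_, ?_⟩
    · rintro U ⟨V, hV, rfl⟩
      rw [perp_finrank, hC V hV]
    · intro T hT
      by_contra hcon
      push_neg at hcon
      have hfin : {U | U ∈ perp '' C ∧ T ≤ U}.Finite := Set.toFinite _
      have hcard : a ≤ hfin.toFinset.card := by
        have := Set.ncard_eq_toFinset_card _ hfin
        omega
      obtain ⟨S', hS'sub, hS'card⟩ := Finset.exists_subset_card_eq hcard
      -- map back through perp
      set S : Finset (Submodule F (Fin n → F)) := S'.image perp with hS
      have hmem : ∀ U ∈ S', U ∈ perp '' C ∧ T ≤ U := by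
        intro U hU
        have := hS'sub hU
        rwa [Set.Finite.mem_toFinset] at this
      have hSsub : (↑S : Set (Submodule F (Fin n → F))) ⊆ C := by
        intro V hV
        simp only [hS, Finset.coe_image, Set.mem_image, Finset.mem_coe] at hV
        obtain ⟨U, hU, rfl⟩ := hV
        obtain ⟨⟨W, hW, rfl⟩, _⟩ := hmem U hU
        rwa [perp_perp]
      have hScard : S.card = a := by
        rw [hS, Finset.card_image_of_injective _ perp_injective, hS'card]
      have hle : S.sup id ≤ perp T := by
        apply Finset.sup_le
        intro V hV
        simp only [hS, Finset.mem_image] at hV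
        obtain ⟨U, hU, rfl⟩ := hV
        obtain ⟨_, hTU⟩ := hmem U hU
        simp only [id_eq]
        rw [le_perp_iff, perp_perp]
        exact hTU
      have h1 := hcov S hSsub hScard
      have h2 : Module.finrank F ↥(S.sup id) ≤ Module.finrank F (perp T) :=
        Submodule.finrank_mono hle
      rw [perp_finrank, hT] at h2
      omega
  · rintro ⟨h1, h2⟩ S hSsub hScard
    by_contra hcon
    push_neg at hcon
    -- the span has small dimension; its perp is big
    have hWr : Module.finrank F ↥(S.sup id) ≤ d + k - 1 := by omega
    have hWn : Module.finrank F ↥(S.sup id) ≤ n := by simpa using Submodule.finrank_le (S.sup id)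
    have hTr : n - k - d + 1 ≤ Module.finrank F ↥(perp (S.sup id)) := by
      rw [perp_finrank]
      omega
    obtain ⟨T, hTle, hTrank⟩ := exists_le_finrank_eq (perp (S.sup id)) (n - k - d + 1) hTr
    have hsub : perp '' (↑S : Set (Submodule F (Fin n → F))) ⊆
        {U | U ∈ perp '' C ∧ T ≤ U} := by
      rintro U ⟨V, hV, rfl⟩
      refine ⟨⟨V, hSsub hV, rfl⟩, ?_⟩
      have hVW : V ≤ S.sup id := Finset.le_sup (f := id) hV
      exact le_trans hTle (perp_anti hVW)
    have hcard : (perp '' (↑S : Set (Submodule F (Fin n → F)))).ncard = a := by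
      rw [Set.ncard_image_of_injective _ perp_injective]
      simp [hScard]
    have := Set.ncard_le_ncard hsub (Set.toFinite _)
    have := h2 T hTrank
    omega
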